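/- Fix real matrices A (n×n) and B (n×m). For a symmetric positive semidefinite n×n matrix Q and a symmetric positive definite m×m matrix R, let P_T(Q,R) be defined by the Riccati iteration P_0(Q,R) = 0 and P_{k+1}(Q,R) = AᵀP_k(Q,R)A − AᵀP_k(Q,R)B(BᵀP_k(Q,R)B+R)⁻¹BᵀP_k(Q,R)A + Q. Let Q̲, Q, Q̄ be symmetric positive definite n×n matrices with Q̲ ⪯ Q ⪯ Q̄, let R, R̄ be symmetric positive definite m×m matrices with R ⪯ R̄, let T ∈ ℕ, and let ρ > 0 be a real number such that ρ·P_T(Q̄,R̄) ⪯ Q̲. Then for every x ∈ ℝⁿ, xᵀQx ≥ ρ·xᵀP_T(Q,R)x; that is, ρ·P_T(Q,R) ⪯ Q. -/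

import Mathlib

open Matrix

/-- The finite-horizon Riccati iteration with `P 0 = 0` and
`P (k+1) = AᵀP_kA − AᵀP_kB(BᵀP_kB+R)⁻¹BᵀP_kA + Q`. -/
noncomputable def riccati {n m : ℕ} (A : Matrix (Fin n) (Fin n) ℝ)
    (B : Matrix (Fin n) (Fin m) ℝ) (Q : Matrix (Fin n) (Fin n) ℝ)
    (R : Matrix (Fin m) (Fin m) ℝ) : ℕ → Matrix (Fin n) (Fin n) ℝ
  | 0 => 0
  | k + 1 =>
      Aᵀ * riccati A B Q R k * A -
        Aᵀ * riccati A B Q R k * B * (Bᵀ * riccati A B Q R k * B + R)⁻¹ *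
          Bᵀ * riccati A B Q R k * A + Q

/-- The Loewner order on real square matrices: `X ⪯ Y` iff `Y − X` is positive semidefinite. -/
def loewnerLE {n : ℕ} (X Y : Matrix (Fin n) (Fin n) ℝ) : Prop := (Y - X).PosSemidef

namespace RiccatiAux

/-- Conjugation preserves positive semidefiniteness (real transpose version). -/
lemma psd_conj {n m : ℕ} {P : Matrix (Fin n) (Fin n) ℝ} (hP : P.PosSemidef)
    (X : Matrix (Fin n) (Fin m) ℝ) : (Xᵀ * P * X).PosSemidef := by
  have := hP.conjTranspose_mul_mul_same X
  rwa [conjTranspose_eq_transpose_of_trivial] at this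

lemma psd_smul {n : ℕ} {M : Matrix (Fin n) (Fin n) ℝ} (hM : M.PosSemidef) {ρ : ℝ}
    (hρ : 0 ≤ ρ) : (ρ • M).PosSemidef := by
  refine .of_dotProduct_mulVec_nonneg ?_ (fun x => ?_)
  · have h := hM.1
    unfold Matrix.IsHermitian at h ⊢
    rw [conjTranspose_smul, h, star_trivial]
  · have h := hM.dotProduct_mulVec_nonneg x
    simp only [smul_mulVec, dotProduct_smul, smul_eq_mul]
    exact mul_nonneg hρ h

/-- The completed-square identity for one step of the Riccati recursion. -/
lemma key {n m : ℕ} (A : Matrix (Fin n) (Fin n) ℝ) (B : Matrix (Fin n) (Fin m) ℝ)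
    (P Q : Matrix (Fin n) (Fin n) ℝ) (R : Matrix (Fin m) (Fin m) ℝ)
    (hP : Pᵀ = P) (hR : Rᵀ = R) (hu : IsUnit (Bᵀ * P * B + R))
    (K : Matrix (Fin m) (Fin n) ℝ) :
    Aᵀ * P * A - Aᵀ * P * B * (Bᵀ * P * B + R)⁻¹ * Bᵀ * P * A + Q
    = (A + B * K)ᵀ * P * (A + B * K) + Kᵀ * R * K + Q
      - (K + (Bᵀ * P * B + R)⁻¹ * (Bᵀ * P * A))ᵀ * (Bᵀ * P * B + R) *
        (K + (Bᵀ * P * B + R)⁻¹ * (Bᵀ * P * A)) := by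
  set S := Bᵀ * P * B + R with hSdef
  have hS : Sᵀ = S := by
    rw [hSdef, transpose_add, hR, transpose_mul, transpose_mul, transpose_transpose, hP,
      Matrix.mul_assoc]
  have : Invertible S := hu.invertible
  have hSi : (S⁻¹)ᵀ = S⁻¹ := by rw [transpose_nonsing_inv, hS]
  have hMt : (Bᵀ * P * A)ᵀ = Aᵀ * P * B := by
    rw [transpose_mul, transpose_mul, transpose_transpose, hP, Matrix.mul_assoc]
  simp only [transpose_add, transpose_mul, Matrix.add_mul, Matrix.mul_add, hSi, hS]
  simp only [← hSdef, Matrix.mul_assoc, hMt]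
  simp only [transpose_transpose, hP, Matrix.inv_mul_cancel_left_of_invertible,
    Matrix.mul_inv_cancel_left_of_invertible]
  simp only [hSdef, Matrix.add_mul, Matrix.mul_add, Matrix.mul_assoc]
  abel

/-- The inner matrix `BᵀPB + R` is positive definite, hence a unit. -/
lemma S_posDef {n m : ℕ} (B : Matrix (Fin n) (Fin m) ℝ)
    {P : Matrix (Fin n) (Fin n) ℝ} {R : Matrix (Fin m) (Fin m) ℝ}
    (hP : P.PosSemidef) (hR : R.PosDef) : (Bᵀ * P * B + R).PosDef :=
  Matrix.PosDef.posSemidef_add (psd_conj hP B) hR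

/-- One Riccati step preserves positive semidefiniteness. -/
lemma step_psd {n m : ℕ} (A : Matrix (Fin n) (Fin n) ℝ) (B : Matrix (Fin n) (Fin m) ℝ)
    {P Q : Matrix (Fin n) (Fin n) ℝ} {R : Matrix (Fin m) (Fin m) ℝ}
    (hP : P.PosSemidef) (hQ : Q.PosSemidef) (hR : R.PosDef) :
    (Aᵀ * P * A - Aᵀ * P * B * (Bᵀ * P * B + R)⁻¹ * Bᵀ * P * A + Q).PosSemidef := by
  have hS := S_posDef B hP hR
  have hPt : Pᵀ = P := hP.1.eq
  have hRt : Rᵀ = R := hR.isHermitian.eq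
  set K : Matrix (Fin m) (Fin n) ℝ := -((Bᵀ * P * B + R)⁻¹ * (Bᵀ * P * A)) with hK
  have h := key A B P Q R hPt hRt hS.isUnit K
  rw [h, hK, neg_add_cancel]
  simp only [transpose_zero, Matrix.zero_mul, Matrix.mul_zero, sub_zero]
  exact ((psd_conj hP _).add (psd_conj hR.posSemidef _)).add hQ

/-- Monotonicity of one Riccati step in `(P, Q, R)`. -/
lemma step_mono {n m : ℕ} (A : Matrix (Fin n) (Fin n) ℝ) (B : Matrix (Fin n) (Fin m) ℝ)
    {P₁ P₂ Q₁ Q₂ : Matrix (Fin n) (Fin n) ℝ} {R₁ R₂ : Matrix (Fin m) (Fin m) ℝ}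
    (hP₁ : P₁.PosSemidef) (hP₂ : P₂.PosSemidef) (hR₁ : R₁.PosDef) (hR₂ : R₂.PosDef)
    (hP : (P₂ - P₁).PosSemidef) (hQ : (Q₂ - Q₁).PosSemidef) (hR : (R₂ - R₁).PosSemidef) :
    ((Aᵀ * P₂ * A - Aᵀ * P₂ * B * (Bᵀ * P₂ * B + R₂)⁻¹ * Bᵀ * P₂ * A + Q₂)
      - (Aᵀ * P₁ * A - Aᵀ * P₁ * B * (Bᵀ * P₁ * B + R₁)⁻¹ * Bᵀ * P₁ * A + Q₁)).PosSemidef := by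
  have hS₁ := S_posDef B hP₁ hR₁
  have hS₂ := S_posDef B hP₂ hR₂
  set K : Matrix (Fin m) (Fin n) ℝ := -((Bᵀ * P₂ * B + R₂)⁻¹ * (Bᵀ * P₂ * A)) with hK
  set L : Matrix (Fin m) (Fin n) ℝ := K + (Bᵀ * P₁ * B + R₁)⁻¹ * (Bᵀ * P₁ * A) with hL
  have h₂ := key A B P₂ Q₂ R₂ hP₂.1.eq hR₂.isHermitian.eq hS₂.isUnit K
  have h₁ := key A B P₁ Q₁ R₁ hP₁.1.eq hR₁.isHermitian.eq hS₁.isUnit K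
  rw [hK, neg_add_cancel] at h₂
  simp only [transpose_zero, Matrix.zero_mul, Matrix.mul_zero, sub_zero] at h₂
  rw [← hL] at h₁
  have heq :
      (Aᵀ * P₂ * A - Aᵀ * P₂ * B * (Bᵀ * P₂ * B + R₂)⁻¹ * Bᵀ * P₂ * A + Q₂)
      - (Aᵀ * P₁ * A - Aᵀ * P₁ * B * (Bᵀ * P₁ * B + R₁)⁻¹ * Bᵀ * P₁ * A + Q₁)
      = (A + B * K)ᵀ * (P₂ - P₁) * (A + B * K) + Kᵀ * (R₂ - R₁) * K + (Q₂ - Q₁)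
        + Lᵀ * (Bᵀ * P₁ * B + R₁) * L := by
    rw [h₁, h₂]
    simp only [Matrix.mul_sub, Matrix.sub_mul]
    abel
  rw [heq]
  exact (((psd_conj hP _).add (psd_conj hR _)).add hQ).add (psd_conj hS₁.posSemidef _)

lemma riccati_psd {n m : ℕ} (A : Matrix (Fin n) (Fin n) ℝ) (B : Matrix (Fin n) (Fin m) ℝ)
    {Q : Matrix (Fin n) (Fin n) ℝ} {R : Matrix (Fin m) (Fin m) ℝ}
    (hQ : Q.PosSemidef) (hR : R.PosDef) (k : ℕ) : (riccati A B Q R k).PosSemidef := by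
  induction k with
  | zero => exact Matrix.PosSemidef.zero
  | succ k ih => exact step_psd A B ih hQ hR

lemma riccati_mono {n m : ℕ} (A : Matrix (Fin n) (Fin n) ℝ) (B : Matrix (Fin n) (Fin m) ℝ)
    {Q₁ Q₂ : Matrix (Fin n) (Fin n) ℝ} {R₁ R₂ : Matrix (Fin m) (Fin m) ℝ}
    (hQ₁ : Q₁.PosSemidef) (hQ₂ : Q₂.PosSemidef) (hR₁ : R₁.PosDef) (hR₂ : R₂.PosDef)
    (hQ : (Q₂ - Q₁).PosSemidef) (hR : (R₂ - R₁).PosSemidef) (k : ℕ) :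
    (riccati A B Q₂ R₂ k - riccati A B Q₁ R₁ k).PosSemidef := by
  induction k with
  | zero => simpa [riccati] using Matrix.PosSemidef.zero
  | succ k ih =>
      exact step_mono A B (riccati_psd A B hQ₁ hR₁ k) (riccati_psd A B hQ₂ hR₂ k)
        hR₁ hR₂ ih hQ hR

end RiccatiAux

/-- Construction of the constant `ρ_T`: if `ρ·P_T(Q̄,R̄) ⪯ Q̲`, then for all admissible
weights `Q̲ ⪯ Q ⪯ Q̄`, `R ⪯ R̄`, we have `ρ·P_T(Q,R) ⪯ Q`, i.e. `xᵀQx ≥ ρ·xᵀP_T(Q,R)x`. -/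
theorem riccati_rho_uniform_bound {n m : ℕ}
    (A : Matrix (Fin n) (Fin n) ℝ) (B : Matrix (Fin n) (Fin m) ℝ)
    (Qlb Q Qub : Matrix (Fin n) (Fin n) ℝ) (R Rub : Matrix (Fin m) (Fin m) ℝ)
    (hQlb : Qlb.PosDef) (hQ : Q.PosDef) (hQub : Qub.PosDef)
    (hR : R.PosDef) (hRub : Rub.PosDef)
    (hQ₁ : loewnerLE Qlb Q) (hQ₂ : loewnerLE Q Qub) (hR₁ : loewnerLE R Rub)
    (T : ℕ) (ρ : ℝ) (hρ : 0 < ρ)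
    (hbound : loewnerLE (ρ • riccati A B Qub Rub T) Qlb) :
    (∀ x : Fin n → ℝ, x ⬝ᵥ (Q *ᵥ x) ≥ ρ * (x ⬝ᵥ (riccati A B Q R T *ᵥ x))) ∧
    loewnerLE (ρ • riccati A B Q R T) Q := by
  have hQQub : (Qub - Q).PosSemidef := hQ₂
  have hmono := RiccatiAux.riccati_mono A B hQ.posSemidef hQub.posSemidef hR hRub
    hQQub hR₁ T
  have h2 : loewnerLE (ρ • riccati A B Q R T) Q := by
    have heq : Q - ρ • riccati A B Q R T
        = (Q - Qlb) + (Qlb - ρ • riccati A B Qub Rub T)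
          + ρ • (riccati A B Qub Rub T - riccati A B Q R T) := by
      simp only [smul_sub]
      abel
    unfold loewnerLE
    rw [heq]
    exact (hQ₁.add hbound).add (RiccatiAux.psd_smul hmono hρ.le)
  refine ⟨fun x => ?_, h2⟩
  have h := h2.dotProduct_mulVec_nonneg x
  rw [star_trivial] at h
  simp only [sub_mulVec, dotProduct_sub, smul_mulVec, dotProduct_smul,
    smul_eq_mul] at h
  linarith
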